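/- Let u : ℝ × ℝⁿ → ℝ be continuously differentiable in t with ∫_ℝ ∫_{ℝⁿ} |∂u/∂t|² dx dt < ∞. Let (m_k) be a sequence of real numbers with m_k → ∞, and suppose the time-translates satisfy ∂u/∂t (t + m_k, x) → g(t, x) as k → ∞, uniformly on compact subsets of ℝ^{n+1}, for some continuous g. Then g ≡ 0. In particular, if in addition u solves the PDE ∂u/∂t = Δu + P(u) and u(t + m_k, x) → v(t, x) locally uniformly together with the derivatives appearing in the equation, then the limit v is independent of t and is an equilibrium: Δv + P(v) = 0. -/

import Mathlib

open MeasureTheory Filter Topology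
open scoped ENNReal

noncomputable section

/-- Euclidean space `ℝⁿ`. -/
abbrev Spc (n : ℕ) := EuclideanSpace ℝ (Fin n)

/-- The Laplacian in the spatial variables. -/
noncomputable def lap {n : ℕ} (f : Spc n → ℝ) (x : Spc n) : ℝ :=
  ∑ i : Fin n, fderiv ℝ (fun y => fderiv ℝ f y (EuclideanSpace.single i 1)) x
    (EuclideanSpace.single i 1)

/-- The polynomial nonlinearity `P(f)(x) = -f(x)^N + ∑_{i<N} aᵢ(x) f(x)^i`. -/
noncomputable def Pfun {n N : ℕ} (a : Fin N → Spc n → ℝ) (f : Spc n → ℝ) (x : Spc n) : ℝ :=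
  -(f x) ^ N + ∑ i : Fin N, a i x * f x ^ (i : ℕ)

/-- The time derivative `∂u/∂t`. -/
noncomputable def timeDeriv {n : ℕ} (u : ℝ × Spc n → ℝ) (t : ℝ) (x : Spc n) : ℝ :=
  deriv (fun s => u (s, x)) t

/-- `u` is a global solution of `∂u/∂t = Δu + P(u)`. -/
def IsSol {n N : ℕ} (a : Fin N → Spc n → ℝ) (u : ℝ × Spc n → ℝ) : Prop :=
  ∀ t x, timeDeriv u t x = lap (fun y => u (t, y)) x + Pfun a (fun y => u (t, y)) x

/-- `w` is an equilibrium: `Δw + P(w) = 0`. -/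
def IsEquilibrium {n N : ℕ} (a : Fin N → Spc n → ℝ) (w : Spc n → ℝ) : Prop :=
  ∀ x, lap w x + Pfun a w x = 0

/-- The energy density `|∂u/∂t|² + |Δu + P(u)|²`. -/
noncomputable def energyDensity {n N : ℕ} (a : Fin N → Spc n → ℝ) (u : ℝ × Spc n → ℝ)
    (t : ℝ) (x : Spc n) : ℝ :=
  (timeDeriv u t x) ^ 2 + (lap (fun y => u (t, y)) x + Pfun a (fun y => u (t, y)) x) ^ 2

/-- The energy `E(u) = (1/2) ∫_ℝ ∫_{ℝⁿ} (|∂u/∂t|² + |Δu + P(u)|²) dx dt`, valued in `ℝ≥0∞`. -/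
noncomputable def energy {n N : ℕ} (a : Fin N → Spc n → ℝ) (u : ℝ × Spc n → ℝ) : ℝ≥0∞ :=
  (1 / 2) * ∫⁻ t : ℝ, ∫⁻ x : Spc n, ENNReal.ofReal (energyDensity a u t x)

/-- The action density `(1/2)|∇f|² + f^{N+1}/(N+1) - ∑_{i<N} aᵢ f^{i+1}/(i+1)`. -/
noncomputable def actionDensity {n N : ℕ} (a : Fin N → Spc n → ℝ) (f : Spc n → ℝ)
    (x : Spc n) : ℝ :=
  (1 / 2) * ‖gradient f x‖ ^ 2 + f x ^ (N + 1) / (N + 1)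
    - ∑ i : Fin N, a i x * f x ^ ((i : ℕ) + 1) / ((i : ℕ) + 1)

/-- The action functional `A(f)`. -/
noncomputable def action {n N : ℕ} (a : Fin N → Spc n → ℝ) (f : Spc n → ℝ) : ℝ :=
  ∫ x : Spc n, actionDensity a f x

/-- `f` has finite action. -/
def FiniteAction {n N : ℕ} (a : Fin N → Spc n → ℝ) (f : Spc n → ℝ) : Prop :=
  Integrable (actionDensity a f)

/-- The coefficients `aᵢ` are smooth, in `L¹ ∩ L∞`, with all derivatives of all orders
bounded. -/
def GoodCoeffs {n N : ℕ} (a : Fin N → Spc n → ℝ) : Prop :=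
  ∀ i, ContDiff ℝ (⊤ : ℕ∞) (a i) ∧ Integrable (a i) ∧
    ∀ k : ℕ, ∃ C : ℝ, ∀ x, ‖iteratedFDeriv ℝ k (a i) x‖ ≤ C

/-- `u`, `∂u/∂t` and the spatial derivatives of `u` up to order two are bounded by a
constant multiple of `(1+|x|)^{-(n+1)}`, uniformly for `t` in compact intervals. -/
def AdmissibleDecay {n : ℕ} (u : ℝ × Spc n → ℝ) : Prop :=
  ∀ T > (0 : ℝ), ∃ C : ℝ, ∀ t : ℝ, ∀ x : Spc n, |t| ≤ T →
    |u (t, x)| ≤ C * (1 + ‖x‖) ^ (-(n + 1 : ℝ)) ∧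
    |timeDeriv u t x| ≤ C * (1 + ‖x‖) ^ (-(n + 1 : ℝ)) ∧
    ‖fderiv ℝ (fun y => u (t, y)) x‖ ≤ C * (1 + ‖x‖) ^ (-(n + 1 : ℝ)) ∧
    ‖iteratedFDeriv ℝ 2 (fun y => u (t, y)) x‖ ≤ C * (1 + ‖x‖) ^ (-(n + 1 : ℝ))

/-- If `u` is continuously differentiable in `t` with
`∫∫ |∂u/∂t|² < ∞`, `m_k → ∞`, and the time-translates `∂u/∂t(· + m_k, ·)` converge locally
uniformly to a continuous `g`, then `g ≡ 0`.  In particular, if moreover `u` solves the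
PDE and the translates `u(· + m_k, ·)` converge locally uniformly to `v` together with the
derivatives appearing in the equation, then `v` is independent of `t` and is an
equilibrium. -/
theorem limit_of_translates_is_equilibrium
    {n N : ℕ} (hn : 1 ≤ n) (hN : 2 ≤ N)
    (a : Fin N → Spc n → ℝ) (ha : GoodCoeffs a)
    (u : ℝ × Spc n → ℝ)
    (hC1 : ∀ x : Spc n, ContDiff ℝ 1 (fun t : ℝ => u (t, x)))
    (hint : (∫⁻ t : ℝ, ∫⁻ x : Spc n, ENNReal.ofReal ((timeDeriv u t x) ^ 2)) < ⊤)
    (m : ℕ → ℝ) (hm : Tendsto m atTop atTop)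
    (g : ℝ × Spc n → ℝ) (hg : Continuous g)
    (hconv : ∀ K : Set (ℝ × Spc n), IsCompact K →
      TendstoUniformlyOn (fun (k : ℕ) (p : ℝ × Spc n) => timeDeriv u (p.1 + m k) p.2)
        g atTop K) :
    (∀ p : ℝ × Spc n, g p = 0) ∧
    (∀ v : ℝ × Spc n → ℝ, IsSol a u →
      (∀ K : Set (ℝ × Spc n), IsCompact K →
        TendstoUniformlyOn (fun (k : ℕ) (p : ℝ × Spc n) => u (p.1 + m k, p.2)) v atTop K ∧
        TendstoUniformlyOn (fun (k : ℕ) (p : ℝ × Spc n) => timeDeriv u (p.1 + m k) p.2)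
          (fun p => timeDeriv v p.1 p.2) atTop K ∧
        TendstoUniformlyOn
          (fun (k : ℕ) (p : ℝ × Spc n) => lap (fun y => u (p.1 + m k, y)) p.2)
          (fun p => lap (fun y => v (p.1, y)) p.2) atTop K) →
      (∀ (t t' : ℝ) (x : Spc n), v (t, x) = v (t', x)) ∧
      IsEquilibrium a (fun x => v (0, x))) := by
  have part1 : ∀ p : ℝ × Spc n, g p = 0 := by
    by_contra hcon
    push_neg at hcon
    obtain ⟨p₀, hp₀⟩ := hcon
    set ε : ℝ := |g p₀| / 2 with hεdef
    have hε0 : 0 < ε := by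
      have : 0 < |g p₀| := abs_pos.mpr hp₀
      positivity
    -- continuity: find δ
    obtain ⟨δ, hδ0, hδ⟩ := Metric.continuousAt_iff.mp hg.continuousAt ε hε0
    set r : ℝ := δ / 2 with hrdef
    have hr0 : 0 < r := by positivity
    set K : Set (ℝ × Spc n) := Metric.closedBall p₀ r with hKdef
    have hKc : IsCompact K := isCompact_closedBall _ _
    -- on K, |g p| ≥ ε
    have hglb : ∀ p ∈ K, ε ≤ |g p| := by
      intro p hp
      have hlt : dist p p₀ < δ := lt_of_le_of_lt hp (by linarith)
      have h1 : dist (g p) (g p₀) < ε := hδ hlt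
      have h2 : |g p₀| - |g p| ≤ |g p₀ - g p| := abs_sub_abs_le_abs_sub _ _
      have h3 : |g p₀ - g p| = dist (g p) (g p₀) := by
        rw [Real.dist_eq, abs_sub_comm]
      have : |g p₀| = 2 * ε := by rw [hεdef]; ring
      linarith
    -- uniform convergence event
    have hev : ∀ᶠ k in atTop, ∀ p ∈ K,
        dist (g p) (timeDeriv u (p.1 + m k) p.2) < ε / 2 :=
      (Metric.tendstoUniformlyOn_iff.mp (hconv K hKc)) (ε / 2) (by positivity)
    -- pointwise lower bound
    have hbd : ∀ k, (∀ p ∈ K, dist (g p) (timeDeriv u (p.1 + m k) p.2) < ε / 2) →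
        ∀ s ∈ Set.Icc (p₀.1 + m k - r) (p₀.1 + m k + r), ∀ x ∈ Metric.closedBall p₀.2 r,
        (ε / 2) ^ 2 ≤ (timeDeriv u s x) ^ 2 := by
      intro k hk s hs x hx
      have hpK : ((s - m k, x) : ℝ × Spc n) ∈ K := by
        rw [hKdef, Metric.mem_closedBall, Prod.dist_eq]
        refine max_le ?_ hx
        rw [Real.dist_eq]
        rw [Set.mem_Icc] at hs
        rw [abs_le]
        constructor <;> simp only <;> linarith [hs.1, hs.2]
      have h1 := hk _ hpK
      have h2 := hglb _ hpK
      have heq : (s - m k) + m k = s := by ring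
      rw [heq] at h1
      have h3 : |g (s - m k, x)| - |timeDeriv u s x| ≤ |g (s - m k, x) - timeDeriv u s x| :=
        abs_sub_abs_le_abs_sub _ _
      rw [Real.dist_eq] at h1
      have h4 : ε / 2 ≤ |timeDeriv u s x| := by linarith
      calc (ε / 2) ^ 2 ≤ |timeDeriv u s x| ^ 2 := by
            apply pow_le_pow_left₀ (by positivity) h4
        _ = (timeDeriv u s x) ^ 2 := sq_abs _
    -- constants
    set cB : ℝ≥0∞ := ENNReal.ofReal ((ε / 2) ^ 2) * volume (Metric.closedBall p₀.2 r) with hcB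
    set c' : ℝ≥0∞ := cB * ENNReal.ofReal (2 * r) with hc'
    set F : ℝ → ℝ≥0∞ := fun s => ∫⁻ x : Spc n, ENNReal.ofReal ((timeDeriv u s x) ^ 2) with hF
    have hc'0 : c' ≠ 0 := by
      apply mul_ne_zero
      · apply mul_ne_zero
        · exact (ENNReal.ofReal_pos.mpr (by positivity)).ne'
        · exact (Metric.measure_closedBall_pos volume _ hr0).ne'
      · exact (ENNReal.ofReal_pos.mpr (by positivity)).ne'
    -- interval lower bound
    have hIbd : ∀ k, (∀ p ∈ K, dist (g p) (timeDeriv u (p.1 + m k) p.2) < ε / 2) →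
        c' ≤ ∫⁻ s in Set.Icc (p₀.1 + m k - r) (p₀.1 + m k + r), F s := by
      intro k hk
      have hFlb : ∀ s ∈ Set.Icc (p₀.1 + m k - r) (p₀.1 + m k + r), cB ≤ F s := by
        intro s hs
        calc cB = ∫⁻ _ in Metric.closedBall p₀.2 r, ENNReal.ofReal ((ε / 2) ^ 2) := by
              rw [setLIntegral_const]
          _ ≤ ∫⁻ x in Metric.closedBall p₀.2 r, ENNReal.ofReal ((timeDeriv u s x) ^ 2) := by
              apply setLIntegral_mono' measurableSet_closedBall
              intro x hx
              exact ENNReal.ofReal_le_ofReal (hbd k hk s hs x hx)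
          _ ≤ F s := setLIntegral_le_lintegral _ _
      calc c' = ENNReal.ofReal (2 * r) * cB := by rw [hc', mul_comm]
        _ = cB * volume (Set.Icc (p₀.1 + m k - r) (p₀.1 + m k + r)) := by
            rw [Real.volume_Icc,
              show p₀.1 + m k + r - (p₀.1 + m k - r) = 2 * r from by ring, mul_comm]
        _ = ∫⁻ _ in Set.Icc (p₀.1 + m k - r) (p₀.1 + m k + r), cB := by
            rw [setLIntegral_const]
        _ ≤ ∫⁻ s in Set.Icc (p₀.1 + m k - r) (p₀.1 + m k + r), F s :=
            setLIntegral_mono' measurableSet_Icc hFlb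
    -- induction
    have hind : ∀ J : ℕ, ∀ M : ℝ, (J : ℝ≥0∞) * c' ≤ ∫⁻ s in Set.Ici M, F s := by
      intro J
      induction J with
      | zero => intro M; simp
      | succ J ih =>
        intro M
        obtain ⟨k, hk1, hk2⟩ := (hev.and (hm.eventually_ge_atTop (M - p₀.1 + r))).exists
        set s₀ : ℝ := p₀.1 + m k with hs₀
        set I : Set ℝ := Set.Icc (s₀ - r) (s₀ + r) with hI
        set T : Set ℝ := Set.Ici (s₀ + r + 1) with hT
        have hdisj : Disjoint I T := by
          rw [Set.disjoint_left]
          intro s hsI hsT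
          rw [hI, Set.mem_Icc] at hsI
          rw [hT, Set.mem_Ici] at hsT
          linarith [hsI.2]
        have hsub : I ∪ T ⊆ Set.Ici M := by
          intro s hs
          rcases hs with hs | hs
          · rw [hI, Set.mem_Icc] at hs
            rw [Set.mem_Ici]
            linarith [hs.1]
          · rw [hT, Set.mem_Ici] at hs
            rw [Set.mem_Ici]
            linarith
        calc ((J + 1 : ℕ) : ℝ≥0∞) * c' = c' + (J : ℝ≥0∞) * c' := by push_cast; ring
          _ ≤ (∫⁻ s in I, F s) + ∫⁻ s in T, F s :=
              add_le_add (hIbd k hk1) (ih (s₀ + r + 1))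
          _ = ∫⁻ s in I ∪ T, F s := by
              rw [Measure.restrict_union hdisj measurableSet_Ici, lintegral_add_measure]
          _ ≤ ∫⁻ s in Set.Ici M, F s :=
              lintegral_mono' (Measure.restrict_mono hsub le_rfl) le_rfl
    -- contradiction
    have hle : ∀ J : ℕ, (J : ℝ≥0∞) * c' ≤ ∫⁻ t : ℝ, F t := fun J =>
      le_trans (hind J 0) (setLIntegral_le_lintegral _ _)
    have htop : Tendsto (fun J : ℕ => (J : ℝ≥0∞) * c') atTop (𝓝 ⊤) := by
      have := ENNReal.Tendsto.mul_const (b := c') ENNReal.tendsto_nat_nhds_top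
        (Or.inl (by simp : (⊤ : ℝ≥0∞) ≠ 0))
      rwa [ENNReal.top_mul hc'0] at this
    obtain ⟨J, hJ⟩ := (htop.eventually (lt_mem_nhds hint)).exists
    exact absurd (hle J) (not_le.mpr hJ)
  refine ⟨part1, ?_⟩
  intro v hsol hv
  have hg0 : g = fun _ => (0 : ℝ) := funext part1
  -- Step A: zero time derivative of v
  have hderiv : ∀ (x : Spc n) (t : ℝ), HasDerivAt (fun s => v (s, x)) 0 t := by
    intro x t
    have hK : IsCompact ((Set.Icc (t - 1) (t + 1)) ×ˢ ({x} : Set (Spc n))) :=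
      isCompact_Icc.prod isCompact_singleton
    obtain ⟨h1, -, -⟩ := hv _ hK
    have hc := hconv _ hK
    rw [hg0] at hc
    set S : Set ℝ := Set.Ioo (t - 1) (t + 1) with hS
    have hSsub : S ⊆ (fun s : ℝ => ((s, x) : ℝ × Spc n)) ⁻¹'
        ((Set.Icc (t - 1) (t + 1)) ×ˢ ({x} : Set (Spc n))) := by
      intro s hs
      exact ⟨Set.mem_Icc_of_Ioo hs, rfl⟩
    have hc' : TendstoUniformlyOn (fun (k : ℕ) (s : ℝ) => timeDeriv u (s + m k) x)
        (fun _ => (0 : ℝ)) atTop S :=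
      ((hc.comp (fun s : ℝ => ((s, x) : ℝ × Spc n))).mono hSsub)
    have hf : ∀ᶠ (k : ℕ) in atTop, ∀ s : ℝ, s ∈ S →
        HasDerivAt (fun s => u (s + m k, x)) (timeDeriv u (s + m k) x) s := by
      filter_upwards with k s _
      have hd : HasDerivAt (fun t : ℝ => u (t, x))
          (deriv (fun t : ℝ => u (t, x)) (s + m k)) (s + m k) :=
        (((hC1 x).differentiable one_ne_zero) (s + m k)).hasDerivAt
      have := hd.comp s (((hasDerivAt_id s).add_const (m k)))
      simpa [timeDeriv, Function.comp_def] using this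
    have hfg : ∀ s : ℝ, s ∈ S → Tendsto (fun k => u (s + m k, x)) atTop (𝓝 (v (s, x))) := by
      intro s hs
      exact h1.tendsto_at (hSsub hs)
    exact hasDerivAt_of_tendstoUniformlyOn isOpen_Ioo hc' hf hfg
      (by constructor <;> simp [hS] <;> linarith)
  constructor
  · intro t t' x
    exact is_const_of_deriv_eq_zero (fun s => (hderiv x s).differentiableAt)
      (fun s => (hderiv x s).deriv) t t'
  · intro x
    obtain ⟨h1, -, h3⟩ := hv {((0 : ℝ), x)} isCompact_singleton
    have t1 : Tendsto (fun k => u (0 + m k, x)) atTop (𝓝 (v (0, x))) := by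
      simpa using h1.tendsto_at (Set.mem_singleton _)
    have t3 : Tendsto (fun k => lap (fun y => u (0 + m k, y)) x) atTop
        (𝓝 (lap (fun y => v (0, y)) x)) := by
      simpa using h3.tendsto_at (Set.mem_singleton _)
    have tg : Tendsto (fun k => timeDeriv u (0 + m k) x) atTop (𝓝 (0 : ℝ)) := by
      have := (hconv {((0 : ℝ), x)} isCompact_singleton).tendsto_at (Set.mem_singleton _)
      simpa [part1] using this
    have tP : Tendsto (fun k => Pfun a (fun y => u (0 + m k, y)) x) atTop
        (𝓝 (Pfun a (fun y => v (0, y)) x)) := by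
      have hφ : Continuous (fun r : ℝ => -r ^ N + ∑ i : Fin N, a i x * r ^ (i : ℕ)) := by
        continuity
      have := (hφ.tendsto (v (0, x))).comp t1
      simpa [Pfun, Function.comp_def] using this
    have t4 : Tendsto (fun k => lap (fun y => u (0 + m k, y)) x
        + Pfun a (fun y => u (0 + m k, y)) x) atTop
        (𝓝 (lap (fun y => v (0, y)) x + Pfun a (fun y => v (0, y)) x)) := t3.add tP
    have heq : (fun k => timeDeriv u (0 + m k) x)
        = fun k => lap (fun y => u (0 + m k, y)) x + Pfun a (fun y => u (0 + m k, y)) x :=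
      funext fun k => hsol (0 + m k) x
    rw [heq] at tg
    exact (tendsto_nhds_unique t4 tg)

end
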